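/- Let r be a real number and let (p_m, q_m)_{m≥1} be integers with p_m ≥ 2, q_m ≥ 1, satisfying 0 < |r·p_m − q_m| < p_m^{−m} for all m ≥ 1 and p_m^{−m} < |r·p_{m−1} − q_{m−1}| for all m ≥ 2, and set λ_m := r·p_m − q_m. Define X : ℝ → ℝ³ by X(t) = (r·t, t, x₃(t)) where x₃(t) := ∑_{m=1}^∞ (m/(2π·p_m^m·λ_m))·sin(2π·λ_m·t). Then the rotation vector ρ = (r, 1, 0) of X fails to exist in the strong sense: sup_{t≥0} ‖X(t) − X(0) − t·(r, 1, 0)‖ = +∞. -/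

import Mathlib

open Real

set_option maxHeartbeats 1000000 in
/-- With the full approximation scheme, `λ_m = r p_m − q_m` and
`X(t) = (r t, t, x₃(t))` where `x₃(t) = ∑_{m≥1} (m/(2π p_m^m λ_m)) sin(2π λ_m t)`, the
rotation vector `ρ = (r, 1, 0)` fails to exist in the strong sense:
`sup_{t≥0} ‖X(t) − X(0) − t ρ‖ = +∞`. -/
theorem stmt18 (r : ℝ) (p q : ℕ → ℤ)
    (hp : ∀ m : ℕ, 1 ≤ m → 2 ≤ p m) (hq : ∀ m : ℕ, 1 ≤ m → 1 ≤ q m)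
    (happrox : ∀ m : ℕ, 1 ≤ m →
      0 < |r * (p m : ℝ) - (q m : ℝ)| ∧
      |r * (p m : ℝ) - (q m : ℝ)| < (((p m : ℝ)) ^ m)⁻¹)
    (hdec : ∀ m : ℕ, 2 ≤ m →
      (((p m : ℝ)) ^ m)⁻¹ < |r * (p (m - 1) : ℝ) - (q (m - 1) : ℝ)|)
    (X : ℝ → ℝ × ℝ × ℝ)
    (hX : ∀ t : ℝ, X t = (r * t, t,
      ∑' m : ℕ, (m : ℝ) / (2 * π * ((p m : ℝ)) ^ m * (r * (p m : ℝ) - (q m : ℝ))) *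
        Real.sin (2 * π * (r * (p m : ℝ) - (q m : ℝ)) * t))) :
    ∀ C : ℝ, ∃ t : ℝ, 0 ≤ t ∧
      C < ‖X t - X 0 - t • ((r, 1, 0) : ℝ × ℝ × ℝ)‖ := by
  intro C
  by_contra hcon
  push_neg at hcon
  have hpi : (0:ℝ) < π := Real.pi_pos
  set L : ℕ → ℝ := fun m => r * (p m : ℝ) - (q m : ℝ) with hLdef
  set c : ℕ → ℝ := fun m => (m : ℝ) / (2 * π * ((p m : ℝ)) ^ m * L m) with hcdef
  set g : ℕ → ℝ → ℝ := fun m t => c m * Real.sin (2 * π * L m * t) with hgdef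
  set f : ℝ → ℝ := fun t => ∑' m : ℕ, g m t with hfdef
  -- norm identity
  have hnorm : ∀ t : ℝ, ‖X t - X 0 - t • ((r, 1, 0) : ℝ × ℝ × ℝ)‖ = |f t| := by
    intro t
    have h0 : f 0 = 0 := by
      simp [hfdef, hgdef]
    have hv : X t - X 0 - t • ((r, 1, 0) : ℝ × ℝ × ℝ) = ((0:ℝ), (0:ℝ), f t) := by
      rw [hX t, hX 0]
      have : f t = ∑' m : ℕ, g m t := rfl
      refine Prod.ext ?_ (Prod.ext ?_ ?_) <;>
        simp [Prod.smul_def, smul_eq_mul, hfdef, hgdef, h0] <;> ring_nf <;>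
        simp only [hcdef, hLdef] <;>
        refine tsum_congr (fun m => ?_) <;> congr 2 <;> ring
    rw [hv]
    simp [Prod.norm_def, Real.norm_eq_abs, abs_nonneg, le_max_iff]
  have hC0 : 0 ≤ C := le_trans (norm_nonneg _) (hcon 0 le_rfl)
  -- choose M
  set M : ℕ := ⌈π ^ 2 * C⌉₊ + 1 with hMdef
  have hM1 : 1 ≤ M := Nat.le_add_left 1 _
  have hMgt : π ^ 2 * C < (M : ℝ) := by
    calc π ^ 2 * C ≤ (⌈π ^ 2 * C⌉₊ : ℝ) := Nat.le_ceil _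
    _ < (M : ℝ) := by exact_mod_cast Nat.lt_succ_self _
  obtain ⟨hLpos, hLlt⟩ := happrox M hM1
  have hLne : L M ≠ 0 := abs_pos.mp hLpos
  have hLabs : 0 < |L M| := abs_pos.mpr hLne
  have hPpos : (0:ℝ) < ((p M : ℝ)) ^ M := by
    have : (2:ℝ) ≤ (p M : ℝ) := by exact_mod_cast hp M hM1
    positivity
  set T : ℝ := (2 * |L M|)⁻¹ with hTdef
  have hTpos : 0 < T := by positivity
  -- bounds for each term
  have hP2 : ∀ m : ℕ, 1 ≤ m → (2:ℝ) ^ m ≤ ((p m : ℝ)) ^ m := by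
    intro m hm
    have h2 : (2:ℝ) ≤ (p m : ℝ) := by exact_mod_cast hp m hm
    exact pow_le_pow_left₀ (by norm_num) h2 m
  have hPmpos : ∀ m : ℕ, 1 ≤ m → (0:ℝ) < ((p m : ℝ)) ^ m := by
    intro m hm
    have h2 : (2:ℝ) ≤ (p m : ℝ) := by exact_mod_cast hp m hm
    positivity
  have hbound : ∀ m : ℕ, ∀ t ∈ Set.Ioc (0:ℝ) T, ‖g m t‖ ≤ (m : ℝ) * (1/2) ^ m * T := by
    intro m t ht
    rcases Nat.eq_zero_or_pos m with hm | hm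
    · subst hm; simp [hgdef, hcdef]
    · have hm1 : 1 ≤ m := hm
      have hLm : L m ≠ 0 := abs_pos.mp (happrox m hm1).1
      have hPm := hPmpos m hm1
      have h1 : ‖g m t‖ ≤ |c m| * |2 * π * L m * t| := by
        rw [hgdef]
        simp only [norm_mul, Real.norm_eq_abs]
        exact mul_le_mul_of_nonneg_left (Real.abs_sin_le_abs) (abs_nonneg _)
      have h2 : |c m| * |2 * π * L m * t| = (m : ℝ) / ((p m : ℝ)) ^ m * |t| := by
        rw [← abs_mul]
        have : c m * (2 * π * L m * t) = (m : ℝ) / ((p m : ℝ)) ^ m * t := by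
          rw [hcdef]; field_simp
        rw [this, abs_mul]
        congr 1
        rw [abs_of_nonneg]
        positivity
      have h3 : (m : ℝ) / ((p m : ℝ)) ^ m * |t| ≤ (m : ℝ) * (1/2) ^ m * T := by
        have htT : |t| ≤ T := by
          rw [abs_of_pos ht.1]; exact ht.2
        have hfrac : (m : ℝ) / ((p m : ℝ)) ^ m ≤ (m : ℝ) * (1/2) ^ m := by
          rw [div_le_iff₀ hPm]
          have : (m : ℝ) * (1/2) ^ m * ((p m : ℝ)) ^ m
              = (m : ℝ) * (((p m : ℝ)) ^ m / 2 ^ m) := by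
            rw [div_pow]; ring
          rw [this]
          have h4 : (1:ℝ) ≤ ((p m : ℝ)) ^ m / 2 ^ m := by
            rw [le_div_iff₀ (by positivity)]
            simpa using hP2 m hm1
          nlinarith [Nat.cast_nonneg (α := ℝ) m]
        calc (m : ℝ) / ((p m : ℝ)) ^ m * |t| ≤ (m : ℝ) / ((p m : ℝ)) ^ m * T :=
              mul_le_mul_of_nonneg_left htT (by positivity)
        _ ≤ (m : ℝ) * (1/2) ^ m * T := mul_le_mul_of_nonneg_right hfrac hTpos.le
      calc ‖g m t‖ ≤ |c m| * |2 * π * L m * t| := h1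
      _ = (m : ℝ) / ((p m : ℝ)) ^ m * |t| := h2
      _ ≤ (m : ℝ) * (1/2) ^ m * T := h3
  have hcontg : ∀ m : ℕ, Continuous (g m) := by
    intro m; rw [hgdef]; fun_prop
  have hint : ∀ m : ℕ, MeasureTheory.IntegrableOn (g m) (Set.Ioc 0 T) := fun m =>
    (hcontg m).integrableOn_Ioc
  have hvolIoc : (MeasureTheory.volume (Set.Ioc (0:ℝ) T)).toReal = T := by
    rw [Real.volume_Ioc]; simp [hTpos.le]
  have hsummable_b : Summable (fun m : ℕ => (m : ℝ) * (1/2) ^ m * T * T) := by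
    have h := summable_pow_mul_geometric_of_norm_lt_one (R := ℝ) 1
      (r := (1/2 : ℝ)) (by norm_num)
    simpa [pow_one] using (h.mul_right T).mul_right T
  have hnormint : ∀ m : ℕ,
      (∫ t in Set.Ioc (0:ℝ) T, ‖g m t‖) ≤ (m : ℝ) * (1/2) ^ m * T * T := by
    intro m
    have h1 : (∫ t in Set.Ioc (0:ℝ) T, ‖g m t‖)
        ≤ (m : ℝ) * (1/2) ^ m * T * ((MeasureTheory.volume (Set.Ioc (0:ℝ) T)).toReal) := by
      have := MeasureTheory.norm_setIntegral_le_of_norm_le_const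
        (μ := MeasureTheory.volume) (s := Set.Ioc (0:ℝ) T)
        (f := fun t => ‖g m t‖) (C := (m : ℝ) * (1/2) ^ m * T)
        (by rw [Real.volume_Ioc]; exact ENNReal.ofReal_lt_top)
        (fun t ht => by rw [norm_norm]; exact hbound m t ht)
      exact le_trans (le_abs_self _) this
    rwa [hvolIoc] at h1
  have hsummable_int : Summable (fun m : ℕ => ∫ t in Set.Ioc (0:ℝ) T, ‖g m t‖) := by
    refine Summable.of_nonneg_of_le (fun m => ?_) hnormint hsummable_b
    exact MeasureTheory.integral_nonneg (fun t => norm_nonneg _)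
  have hsum : HasSum (fun m : ℕ => ∫ t in Set.Ioc (0:ℝ) T, g m t)
      (∫ t in Set.Ioc (0:ℝ) T, f t) := by
    have := MeasureTheory.hasSum_integral_of_summable_integral_norm
      (μ := MeasureTheory.volume.restrict (Set.Ioc (0:ℝ) T)) (F := g) hint hsummable_int
    exact this
  -- value of each integral
  have hIval : ∀ m : ℕ, 1 ≤ m → (∫ t in Set.Ioc (0:ℝ) T, g m t)
      = (m : ℝ) / (2 * π * ((p m : ℝ)) ^ m * L m * (2 * π * L m))
        * (1 - Real.cos (2 * π * L m * T)) := by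
    intro m hm
    have hLm : L m ≠ 0 := abs_pos.mp (happrox m hm).1
    have ha : 2 * π * L m ≠ 0 := by
      intro h
      rcases mul_eq_zero.1 h with h' | h'
      · rcases mul_eq_zero.1 h' with h'' | h''
        · norm_num at h''
        · exact hpi.ne' h''
      · exact hLm h'
    rw [← intervalIntegral.integral_of_le hTpos.le]
    rw [hgdef]
    simp only
    rw [intervalIntegral.integral_const_mul]
    have hcomp : (∫ t in (0:ℝ)..T, Real.sin (2 * π * L m * t))
        = (2 * π * L m)⁻¹ * (1 - Real.cos (2 * π * L m * T)) := by
      rw [intervalIntegral.integral_comp_mul_left Real.sin ha]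
      rw [integral_sin]
      simp [smul_eq_mul, mul_zero]
    rw [hcomp, hcdef]
    field_simp
  have hInonneg : ∀ m : ℕ, 0 ≤ (∫ t in Set.Ioc (0:ℝ) T, g m t) := by
    intro m
    rcases Nat.eq_zero_or_pos m with hm | hm
    · subst hm
      simp [hgdef, hcdef]
    · rw [hIval m hm]
      have hPm := hPmpos m hm
      have hcos : Real.cos (2 * π * L m * T) ≤ 1 := Real.cos_le_one _
      apply mul_nonneg _ (by linarith)
      have hden : 2 * π * ((p m : ℝ)) ^ m * L m * (2 * π * L m)
          = (2 * π) ^ 2 * ((p m : ℝ)) ^ m * (L m) ^ 2 := by ring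
      rw [hden]
      positivity
  -- upper bound on the integral
  have hupper : (∫ t in Set.Ioc (0:ℝ) T, f t) ≤ C * T := by
    have h := MeasureTheory.norm_setIntegral_le_of_norm_le_const
      (μ := MeasureTheory.volume) (s := Set.Ioc (0:ℝ) T) (f := f) (C := C)
      (by rw [Real.volume_Ioc]; exact ENNReal.ofReal_lt_top)
      (fun t ht => by
        rw [Real.norm_eq_abs, ← hnorm t]
        exact hcon t ht.1.le)
    rw [MeasureTheory.measureReal_def, hvolIoc] at h
    exact le_trans (le_abs_self _) h
  -- lower bound: the M-th term
  have hlower : (M : ℝ) / (2 * π ^ 2 * ((p M : ℝ)) ^ M * (L M) ^ 2)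
      ≤ (∫ t in Set.Ioc (0:ℝ) T, f t) := by
    have hIM : (∫ t in Set.Ioc (0:ℝ) T, g M t)
        = (M : ℝ) / (2 * π ^ 2 * ((p M : ℝ)) ^ M * (L M) ^ 2) := by
      rw [hIval M hM1]
      have hcosval : Real.cos (2 * π * L M * T) = -1 := by
        rcases lt_or_gt_of_ne hLne with hneg | hpos
        · have : 2 * π * L M * T = -π := by
            rw [hTdef, abs_of_neg hneg]
            field_simp
          rw [this, Real.cos_neg, Real.cos_pi]
        · have : 2 * π * L M * T = π := by
            rw [hTdef, abs_of_pos hpos]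
            field_simp
          rw [this, Real.cos_pi]
      rw [hcosval]
      have hL2 : (L M) ^ 2 ≠ 0 := pow_ne_zero _ hLne
      field_simp
      ring
    rw [← hIM]
    exact Summable.le_tsum hsum.summable M (fun m _ => hInonneg m) |>.trans_eq hsum.tsum_eq
  -- combine
  have hPA : ((p M : ℝ)) ^ M * |L M| < 1 := by
    have h := mul_lt_mul_of_pos_left hLlt hPpos
    rwa [mul_inv_cancel₀ hPpos.ne'] at h
  have hkey : (M : ℝ) / (2 * π ^ 2 * ((p M : ℝ)) ^ M * (L M) ^ 2) ≤ C * T :=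
    le_trans hlower hupper
  have hL2abs : (L M) ^ 2 = |L M| ^ 2 := (sq_abs _).symm
  have hfinal : (M : ℝ) ≤ C * (π ^ 2 * (((p M : ℝ)) ^ M * |L M|)) := by
    rw [hL2abs] at hkey
    rw [div_le_iff₀ (by positivity)] at hkey
    rw [hTdef] at hkey
    have h2A : (2 * |L M|) ≠ 0 := by positivity
    have heq : C * (2 * |L M|)⁻¹ * (2 * π ^ 2 * ((p M : ℝ)) ^ M * |L M| ^ 2)
        = C * (π ^ 2 * (((p M : ℝ)) ^ M * |L M|)) := by
      calc C * (2 * |L M|)⁻¹ * (2 * π ^ 2 * ((p M : ℝ)) ^ M * |L M| ^ 2)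
          = C * ((2 * |L M|)⁻¹ * (2 * |L M|)) * (π ^ 2 * (((p M : ℝ)) ^ M * |L M|)) := by
            ring
        _ = C * (π ^ 2 * (((p M : ℝ)) ^ M * |L M|)) := by
            rw [inv_mul_cancel₀ h2A]; ring
    rwa [heq] at hkey
  have : C * (π ^ 2 * (((p M : ℝ)) ^ M * |L M|)) ≤ C * π ^ 2 := by
    have h1 : π ^ 2 * (((p M : ℝ)) ^ M * |L M|) ≤ π ^ 2 * 1 :=
      mul_le_mul_of_nonneg_left hPA.le (by positivity)
    nlinarith
  nlinarith
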